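/- Let n ≥ 1 and let x⁽¹⁾,…,x⁽ⁿ⁺¹⁾ be the vertices of a regular simplex inscribed into the ball B(x⁰;R) in ℝⁿ. Let A ⊆ {1,…,n+1} with |A| = m (1 ≤ m ≤ n), let g be the centroid of {x⁽ʲ⁾ : j ∈ A}, let h be the centroid of {x⁽ʲ⁾ : j ∉ A}, and let y be the unique point with ‖y − x⁰‖ = R of the form y = g + t(h − g) with t > 0. Then every affine function p : ℝⁿ → ℝ satisfying p(x⁽ʲ⁾) = −1 for j ∈ A and p(x⁽ʲ⁾) = 1 for j ∉ A satisfies p(y) = (n+1−2m)/(n+1) + 2R/‖g − h‖. -/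

import Mathlib

set_option maxHeartbeats 1000000

theorem value_of_affine_pm_one_function_at_y
    {n : ℕ} (hn : 1 ≤ n)
    (x0 : EuclideanSpace ℝ (Fin n)) (R : ℝ) (hR : 0 < R)
    (x : Fin (n + 1) → EuclideanSpace ℝ (Fin n))
    (hind : AffineIndependent ℝ x)
    (hreg : ∃ d : ℝ, ∀ i j, i ≠ j → dist (x i) (x j) = d)
    (hins : ∀ j, dist (x j) x0 = R)
    (m : ℕ) (hm1 : 1 ≤ m) (hm2 : m ≤ n)
    (A : Finset (Fin (n + 1))) (hA : A.card = m)
    (g h : EuclideanSpace ℝ (Fin n))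
    (hg : g = Finset.centroid ℝ A x)
    (hh : h = Finset.centroid ℝ Aᶜ x)
    (y : EuclideanSpace ℝ (Fin n)) (t : ℝ) (ht : 0 < t)
    (hy : y = g + t • (h - g)) (hyR : dist y x0 = R)
    (p : EuclideanSpace ℝ (Fin n) →ᵃ[ℝ] ℝ)
    (hpA : ∀ j ∈ A, p (x j) = -1)
    (hpAc : ∀ j ∉ A, p (x j) = 1) :
    p y = ((n : ℝ) + 1 - 2 * m) / ((n : ℝ) + 1) + 2 * R / ‖g - h‖ := by
  classical
  obtain ⟨d, hd⟩ := hreg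
  have hAne : A.Nonempty := Finset.card_pos.mp (by rw [hA]; omega)
  have hAcc : Aᶜ.card = n + 1 - m := by
    rw [Finset.card_compl, hA, Fintype.card_fin]
  set k : ℕ := n + 1 - m with hk
  have hkm : m + k = n + 1 := by omega
  have hAcne : Aᶜ.Nonempty := Finset.card_pos.mp (by rw [hAcc]; omega)
  have hm0 : (m : ℝ) ≠ 0 := Nat.cast_ne_zero.mpr (by omega)
  have hk0 : (k : ℝ) ≠ 0 := Nat.cast_ne_zero.mpr (by omega)
  have hn1 : ((n : ℝ) + 1) ≠ 0 := by positivity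
  have hwA : ∑ i ∈ A, A.centroidWeights ℝ i = 1 :=
    A.sum_centroidWeights_eq_one_of_nonempty ℝ hAne
  have hwAc : ∑ i ∈ Aᶜ, Aᶜ.centroidWeights ℝ i = 1 :=
    Aᶜ.sum_centroidWeights_eq_one_of_nonempty ℝ hAcne
  -- values of p at centroids
  have hpg : p g = -1 := by
    rw [hg, Finset.centroid_def, Finset.map_affineCombination _ _ _ hwA,
      Finset.affineCombination_eq_linear_combination _ _ _ hwA]
    rw [Finset.sum_congr rfl (fun i hi => by
      simp [Finset.centroidWeights_apply, hA, hpA i hi] :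
      ∀ i ∈ A, A.centroidWeights ℝ i • (p ∘ x) i = (m : ℝ)⁻¹ * (-1))]
    rw [Finset.sum_const, hA, nsmul_eq_mul]
    field_simp
  have hph : p h = 1 := by
    rw [hh, Finset.centroid_def, Finset.map_affineCombination _ _ _ hwAc,
      Finset.affineCombination_eq_linear_combination _ _ _ hwAc]
    rw [Finset.sum_congr rfl (fun i hi => by
      simp [Finset.centroidWeights_apply, hAcc, hpAc i (Finset.mem_compl.mp hi)] :
      ∀ i ∈ Aᶜ, Aᶜ.centroidWeights ℝ i • (p ∘ x) i = (k : ℝ)⁻¹ * 1)]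
    rw [Finset.sum_const, hAcc, nsmul_eq_mul]
    field_simp
  -- p y = 2t - 1
  have hpy : p y = 2 * t - 1 := by
    have : y = t • (h - g) +ᵥ g := by rw [hy]; abel_nf; rw [vadd_eq_add]; abel
    rw [this, AffineMap.map_vadd, p.linear.map_smul]
    have hgh : h - g = h -ᵥ g := rfl
    rw [hgh, AffineMap.linearMap_vsub, hph, hpg]
    simp [vsub_eq_sub, vadd_eq_add]
    ring
  -- the center is the centroid: ∑ (x j - x0) = 0
  set v : Fin (n + 1) → EuclideanSpace ℝ (Fin n) := fun j => x j - x0 with hv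
  have hvnorm : ∀ j, ‖v j‖ = R := fun j => by
    rw [hv]; rw [← dist_eq_norm]; exact hins j
  set a : ℝ := R ^ 2 - d ^ 2 / 2 with ha
  have hvij : ∀ i j, i ≠ j → inner ℝ (v i) (v j) = a := by
    intro i j hij
    have h1 : ‖v i - v j‖ = d := by
      have : v i - v j = x i - x j := by simp [hv]
      rw [this, ← dist_eq_norm]; exact hd i j hij
    have h2 := norm_sub_sq_real (v i) (v j)
    rw [h1, hvnorm, hvnorm] at h2
    rw [ha]; nlinarith [h2]
  set s : EuclideanSpace ℝ (Fin n) := ∑ j, v j with hs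
  have hsum : ∀ i, (inner ℝ (v i) s : ℝ) = R ^ 2 + n * a := by
    intro i
    rw [hs, inner_sum]
    rw [← Finset.add_sum_erase _ _ (Finset.mem_univ i)]
    have h1 : (inner ℝ (v i) (v i) : ℝ) = R ^ 2 := by
      rw [real_inner_self_eq_norm_sq, hvnorm]
    have h2 : ∑ j ∈ Finset.univ.erase i, (inner ℝ (v i) (v j) : ℝ) = n * a := by
      rw [Finset.sum_congr rfl (fun j hj =>
        hvij i j (Ne.symm (Finset.ne_of_mem_erase hj)))]
      rw [Finset.sum_const, Finset.card_erase_of_mem (Finset.mem_univ i),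
        Finset.card_univ, Fintype.card_fin]
      simp [nsmul_eq_mul]
    rw [h1, h2]
  have hs0 : s = 0 := by
    have htop : vectorSpan ℝ (Set.range x) = ⊤ :=
      hind.vectorSpan_eq_top_of_card_eq_finrank_add_one
        (by rw [Fintype.card_fin, finrank_euclideanSpace, Fintype.card_fin])
    have hle : vectorSpan ℝ (Set.range x) ≤ (ℝ ∙ s)ᗮ := by
      rw [vectorSpan_def]
      apply Submodule.span_le.mpr
      rintro w ⟨_, ⟨i, rfl⟩, _, ⟨j, rfl⟩, rfl⟩
      rw [SetLike.mem_coe, Submodule.mem_orthogonal_singleton_iff_inner_left]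
      have h1 : (fun x1 x2 => x1 -ᵥ x2) (x i) (x j) = v i - v j := by simp [hv]
      rw [h1, inner_sub_left, hsum, hsum, sub_self]
    have hmem : s ∈ (ℝ ∙ s)ᗮ := hle (htop ▸ Submodule.mem_top)
    rw [Submodule.mem_orthogonal_singleton_iff_inner_right] at hmem
    exact inner_self_eq_zero.mp hmem
  have hsum0 : ∑ j, x j = ((n : ℝ) + 1) • x0 := by
    have h1 : ∑ j, v j = (∑ j, x j) - ((n + 1 : ℕ) : ℝ) • x0 := by
      rw [hv, Finset.sum_sub_distrib, Finset.sum_const, Finset.card_univ,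
        Fintype.card_fin, Nat.cast_smul_eq_nsmul]
    rw [← hs, hs0] at h1
    have := sub_eq_zero.mp h1.symm
    rw [this]; norm_num
  -- centroid sums
  have hgsum : (m : ℝ) • g = ∑ j ∈ A, x j := by
    rw [hg, Finset.centroid_def, Finset.affineCombination_eq_linear_combination _ _ _ hwA,
      Finset.smul_sum]
    exact Finset.sum_congr rfl fun i hi => by
      rw [Finset.centroidWeights_apply, hA, smul_smul, mul_inv_cancel₀ hm0, one_smul]
  have hhsum : (k : ℝ) • h = ∑ j ∈ Aᶜ, x j := by
    rw [hh, Finset.centroid_def, Finset.affineCombination_eq_linear_combination _ _ _ hwAc,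
      Finset.smul_sum]
    exact Finset.sum_congr rfl fun i hi => by
      rw [Finset.centroidWeights_apply, hAcc, smul_smul, mul_inv_cancel₀ hk0, one_smul]
  have hsplit : (m : ℝ) • g + (k : ℝ) • h = ((n : ℝ) + 1) • x0 := by
    rw [hgsum, hhsum, Finset.sum_add_sum_compl, hsum0]
  -- geometry on the line
  set u : EuclideanSpace ℝ (Fin n) := g - h with hu
  have hune : u ≠ 0 := by
    intro h0
    have : g = h := by rwa [hu, sub_eq_zero] at h0
    rw [this, hph] at hpg; norm_num at hpg
  have hupos : 0 < ‖u‖ := norm_pos_iff.mpr hune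
  set c : ℝ := (k : ℝ) / ((n : ℝ) + 1) with hc
  have hgx0 : g - x0 = c • u := by
    have hmk : (m : ℝ) + (k : ℝ) = (n : ℝ) + 1 := by
      rw [← Nat.cast_add, hkm]; push_cast; ring
    have h1 : ((n : ℝ) + 1) • (g - x0) = (k : ℝ) • u := by
      rw [hu, smul_sub, smul_sub, ← hsplit, ← hmk]
      module
    have h2 := congrArg (fun z => (((n : ℝ) + 1)⁻¹) • z) h1
    simp only [smul_smul, inv_mul_cancel₀ hn1, one_smul] at h2
    rw [h2, hc, div_eq_inv_mul, mul_smul]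
  have hyx0 : y - x0 = (c - t) • u := by
    have h1 : y - x0 = (g - x0) - t • u := by rw [hy, hu]; module
    rw [h1, hgx0, ← sub_smul]
  have hynorm : |c - t| * ‖u‖ = R := by
    rw [← hyR, dist_eq_norm, hyx0, norm_smul, Real.norm_eq_abs]
  -- bound ‖g - x0‖ ≤ R
  have hgle : c * ‖u‖ ≤ R := by
    have h1 : (m : ℝ) • (g - x0) = ∑ j ∈ A, v j := by
      rw [hv, Finset.sum_sub_distrib, Finset.sum_const, hA, smul_sub, hgsum,
        Nat.cast_smul_eq_nsmul]
    have h2 : (m : ℝ) * ‖g - x0‖ ≤ (m : ℝ) * R := by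
      have h3 : ‖(m : ℝ) • (g - x0)‖ ≤ ∑ j ∈ A, ‖v j‖ := by
        rw [h1]; exact norm_sum_le _ _
      rw [norm_smul, Real.norm_eq_abs, abs_of_nonneg (Nat.cast_nonneg m)] at h3
      calc (m : ℝ) * ‖g - x0‖ ≤ ∑ j ∈ A, ‖v j‖ := h3
        _ = (m : ℝ) * R := by
            rw [Finset.sum_congr rfl (fun j _ => hvnorm j), Finset.sum_const, hA,
              nsmul_eq_mul]
    have h4 : ‖g - x0‖ ≤ R := le_of_mul_le_mul_left h2 (by positivity)
    calc c * ‖u‖ = ‖g - x0‖ := by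
          rw [hgx0, norm_smul, Real.norm_eq_abs, abs_of_nonneg (by rw [hc]; positivity)]
      _ ≤ R := h4
  -- determine t
  have htval : t = c + R / ‖u‖ := by
    have hcn : c - t < 0 := by
      by_contra h0
      push_neg at h0
      rw [abs_of_nonneg h0] at hynorm
      nlinarith [mul_pos ht hupos]
    rw [abs_of_neg hcn] at hynorm
    have : t - c = R / ‖u‖ := by
      field_simp
      nlinarith [hynorm]
    linarith [this]
  -- finish
  have hkc : (k : ℝ) = (n : ℝ) + 1 - (m : ℝ) := by
    have : (m : ℝ) + (k : ℝ) = (n : ℝ) + 1 := by rw [← Nat.cast_add, hkm]; push_cast; ring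
    linarith
  rw [hpy, htval, hc, hkc]
  field_simp
  ring
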